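/- If d ~ Dir(1,…,1) in dimension n ≥ 3, then for any i ≠ j, the joint survival function satisfies P(d_i > q, d_j > q) = max(1 − 2q, 0)^{n−1} for q ∈ [0,1]. -/

import Mathlib

open MeasureTheory

lemma simplex_vol : ∀ (m : ℕ) (r : ℝ), 0 ≤ r →
    volume {x : Fin m → ℝ | (∀ k, 0 ≤ x k) ∧ ∑ k, x k ≤ r}
      = ENNReal.ofReal (r ^ m / m.factorial) := by
  intro m
  induction m with
  | zero =>
    intro r hr
    have h : {x : Fin 0 → ℝ | (∀ k, 0 ≤ x k) ∧ ∑ k, x k ≤ r} = Set.univ := by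
      ext x
      simp [Finset.univ_eq_empty, hr]
    rw [h, volume_pi, Measure.pi_univ]
    simp
  | succ m ih =>
    intro r hr
    have hmp := MeasureTheory.volume_preserving_piFinSuccAbove (fun _ : Fin (m+1) => ℝ) 0
    set T : Set (ℝ × (Fin m → ℝ)) :=
      {p | 0 ≤ p.1 ∧ (∀ k, 0 ≤ p.2 k) ∧ p.1 + ∑ k, p.2 k ≤ r} with hTdef
    have hTm : MeasurableSet T := by
      apply IsClosed.measurableSet
      have h1 : IsClosed {p : ℝ × (Fin m → ℝ) | 0 ≤ p.1} :=
        isClosed_le continuous_const continuous_fst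
      have h2 : IsClosed {p : ℝ × (Fin m → ℝ) | ∀ k, 0 ≤ p.2 k} := by
        have : {p : ℝ × (Fin m → ℝ) | ∀ k, 0 ≤ p.2 k} = ⋂ k, {p | 0 ≤ p.2 k} := by
          ext p; simp
        rw [this]
        exact isClosed_iInter fun k =>
          isClosed_le continuous_const ((continuous_apply k).comp continuous_snd)
      have h3 : IsClosed {p : ℝ × (Fin m → ℝ) | p.1 + ∑ k, p.2 k ≤ r} := by
        apply isClosed_le _ continuous_const
        exact continuous_fst.add (continuous_finset_sum _ fun k _ =>
          (continuous_apply k).comp continuous_snd)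
      have : T = {p : ℝ × (Fin m → ℝ) | 0 ≤ p.1} ∩
          ({p | ∀ k, 0 ≤ p.2 k} ∩ {p | p.1 + ∑ k, p.2 k ≤ r}) := by
        ext p; simp [hTdef, and_assoc]
      rw [this]
      exact h1.inter (h2.inter h3)
    have key : volume {x : Fin (m+1) → ℝ | (∀ k, 0 ≤ x k) ∧ ∑ k, x k ≤ r}
        = volume T := by
      rw [← hmp.measure_preimage hTm.nullMeasurableSet]
      congr 1
      ext x
      simp only [Set.mem_preimage, MeasurableEquiv.piFinSuccAbove_apply, hTdef,
        Set.mem_setOf_eq, Fin.removeNth, Fin.sum_univ_succ, Fin.forall_fin_succ,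
        Fin.succAbove_zero, and_assoc, Fin.insertNthEquiv, Equiv.coe_fn_symm_mk]
    rw [key, Measure.volume_eq_prod ℝ (Fin m → ℝ), Measure.prod_apply hTm]
    have slice : ∀ t : ℝ, volume (Prod.mk t ⁻¹' T)
        = Set.indicator (Set.Icc 0 r)
            (fun t => ENNReal.ofReal ((r - t) ^ m / m.factorial)) t := by
      intro t
      by_cases ht : t ∈ Set.Icc (0:ℝ) r
      · rw [Set.indicator_of_mem ht]
        have h : Prod.mk t ⁻¹' T
            = {y : Fin m → ℝ | (∀ k, 0 ≤ y k) ∧ ∑ k, y k ≤ r - t} := by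
          ext y
          simp only [hTdef, Set.mem_preimage, Set.mem_setOf_eq, ht.1, true_and]
          constructor
          · rintro ⟨h1, h2⟩; exact ⟨h1, by linarith⟩
          · rintro ⟨h1, h2⟩; exact ⟨h1, by linarith⟩
        rw [h, ih (r - t) (by linarith [ht.2])]
      · rw [Set.indicator_of_notMem ht]
        have h : Prod.mk t ⁻¹' T = ∅ := by
          ext y
          simp only [hTdef, Set.mem_preimage, Set.mem_setOf_eq, Set.mem_empty_iff_false,
            iff_false]
          rintro ⟨h1, h2, h3⟩
          have hs : 0 ≤ ∑ k, y k := Finset.sum_nonneg fun k _ => h2 k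
          exact ht ⟨h1, by linarith⟩
        rw [h]; simp
    simp_rw [slice]
    rw [lintegral_indicator (hs := measurableSet_Icc)]
    have hcont : Continuous (fun t : ℝ => (r - t) ^ m / m.factorial) := by
      continuity
    have hint : IntegrableOn (fun t : ℝ => (r - t) ^ m / m.factorial) (Set.Icc 0 r) :=
      hcont.integrableOn_Icc
    have hnn : 0 ≤ᵐ[volume.restrict (Set.Icc 0 r)]
        fun t : ℝ => (r - t) ^ m / m.factorial := by
      refine ae_restrict_of_forall_mem measurableSet_Icc fun t ht => ?_
      have : (0:ℝ) ≤ (r - t) ^ m := pow_nonneg (by linarith [ht.2]) m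
      positivity
    rw [← ofReal_integral_eq_lintegral_ofReal hint hnn]
    congr 1
    rw [MeasureTheory.integral_Icc_eq_integral_Ioc,
        ← intervalIntegral.integral_of_le hr]
    rw [intervalIntegral.integral_div]
    rw [intervalIntegral.integral_comp_sub_left (fun x => x ^ m) r]
    rw [sub_self, sub_zero, integral_pow]
    rw [Nat.factorial_succ]
    push_cast
    field_simp
    rw [zero_pow (Nat.succ_ne_zero m), sub_zero]

/-- For d ~ Dir(1,…,1) in dimension n ≥ 3 (parameterized by its first n−1 coordinates with
density (n−1)!), the joint survival function satisfies P(dᵢ > q, dⱼ > q) = max(1−2q, 0)^{n−1}. -/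
theorem stmt_15 (n : ℕ) (hn : 3 ≤ n) (i j : Fin (n - 1)) (hij : i ≠ j)
    (q : ℝ) (hq : q ∈ Set.Icc (0 : ℝ) 1) :
    ((Nat.factorial (n - 1) : ENNReal)) * MeasureTheory.volume
        {x : Fin (n - 1) → ℝ | (∀ k, 0 ≤ x k) ∧ ∑ k, x k ≤ 1 ∧ q < x i ∧ q < x j}
      = ENNReal.ofReal ((max (1 - 2 * q) 0) ^ (n - 1)) := by
  obtain ⟨hq0, hq1⟩ := hq
  set S : Set (Fin (n - 1) → ℝ) :=
    {x : Fin (n - 1) → ℝ | (∀ k, 0 ≤ x k) ∧ ∑ k, x k ≤ 1 ∧ q < x i ∧ q < x j} with hS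
  by_cases hhalf : q < 1/2
  · have h2q : (0:ℝ) ≤ 1 - 2*q := by linarith
    have hmax : max (1 - 2*q) 0 = 1 - 2*q := max_eq_left h2q
    set c : Fin (n - 1) → ℝ := fun k => (if k = i then q else 0) + (if k = j then q else 0)
      with hc
    have hci : c i = q := by simp [hc, hij]
    have hcj : c j = q := by simp [hc, Ne.symm hij]
    have hck : ∀ k, k ≠ i → k ≠ j → c k = 0 := by
      intro k h1 h2; simp [hc, h1, h2]
    have hcnn : ∀ k, 0 ≤ c k := by
      intro k; simp only [hc]; split_ifs <;> linarith
    have hcsum : ∑ k, c k = 2*q := by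
      rw [hc, Finset.sum_add_distrib, Finset.sum_ite_eq' Finset.univ i (fun _ => q),
        Finset.sum_ite_eq' Finset.univ j (fun _ => q)]
      simp; ring
    set Simp : Set (Fin (n - 1) → ℝ) :=
      {y : Fin (n - 1) → ℝ | (∀ k, 0 ≤ y k) ∧ ∑ k, y k ≤ 1 - 2*q} with hSimp
    set N : Set (Fin (n - 1) → ℝ) := {y | y i = 0} ∪ {y | y j = 0} with hN
    have hNnull : volume N = 0 := by
      rw [hN]
      apply measure_union_null
      · rw [volume_pi]; exact Measure.pi_hyperplane _ i 0
      · rw [volume_pi]; exact Measure.pi_hyperplane _ j 0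
    have hsub1 : Simp \ N ⊆ (fun h => c + h) ⁻¹' S := by
      rintro y ⟨⟨hnn, hsum⟩, hyN⟩
      simp only [hN, Set.mem_union, Set.mem_setOf_eq, not_or] at hyN
      have hyi : 0 < y i := lt_of_le_of_ne (hnn i) (Ne.symm hyN.1)
      have hyj : 0 < y j := lt_of_le_of_ne (hnn j) (Ne.symm hyN.2)
      refine ⟨fun k => by have := hcnn k; have := hnn k; simp only [Pi.add_apply]; linarith,
        ?_, ?_, ?_⟩
      · simp only [Pi.add_apply, Finset.sum_add_distrib, hcsum]; linarith
      · simp only [Pi.add_apply, hci]; linarith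
      · simp only [Pi.add_apply, hcj]; linarith
    have hsub2 : (fun h => c + h) ⁻¹' S ⊆ Simp := by
      rintro y ⟨hnn, hsum, hqi, hqj⟩
      simp only [Pi.add_apply, hci] at hqi
      simp only [Pi.add_apply, hcj] at hqj
      simp only [Pi.add_apply, Finset.sum_add_distrib, hcsum] at hsum
      refine ⟨fun k => ?_, by linarith⟩
      by_cases hki : k = i
      · subst hki; linarith
      by_cases hkj : k = j
      · subst hkj; linarith
      · have := hnn k; simp only [Pi.add_apply, hck k hki hkj] at this; linarith
    have hvol : volume S = volume Simp := by
      rw [← measure_preimage_add volume c S]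
      apply le_antisymm (measure_mono hsub2)
      calc volume Simp ≤ volume ((Simp \ N) ∪ N) :=
            measure_mono (fun y hy => by
              by_cases h : y ∈ N
              · exact Or.inr h
              · exact Or.inl ⟨hy, h⟩)
        _ ≤ volume (Simp \ N) + volume N := measure_union_le _ _
        _ = volume (Simp \ N) := by rw [hNnull, add_zero]
        _ ≤ volume ((fun h => c + h) ⁻¹' S) := measure_mono hsub1
    rw [hvol, hSimp, simplex_vol (n - 1) (1 - 2*q) h2q, hmax]
    rw [← ENNReal.ofReal_natCast, ← ENNReal.ofReal_mul (by positivity)]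
    congr 1
    rw [mul_div_cancel₀]
    exact_mod_cast Nat.factorial_ne_zero (n - 1)
  · have hempty : S = ∅ := by
      ext x
      simp only [hS, Set.mem_setOf_eq, Set.mem_empty_iff_false, iff_false]
      rintro ⟨h0, h1, h2, h3⟩
      have hle : x i + x j ≤ ∑ k, x k := by
        have := Finset.sum_le_sum_of_subset_of_nonneg (Finset.subset_univ {i, j})
          (fun k _ _ => h0 k)
        rwa [Finset.sum_pair hij] at this
      have : (1:ℝ)/2 ≤ q := not_lt.mp hhalf
      linarith
    rw [hempty, measure_empty, mul_zero]
    have hmax : max (1 - 2*q) 0 = 0 := max_eq_right (by linarith [not_lt.mp hhalf])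
    rw [hmax, zero_pow (show n - 1 ≠ 0 by omega), ENNReal.ofReal_zero]
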